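/- For every k ≥ 1 one has θ_k·√β_k ≥ (1/γ)·Σ_{i=2}^{k} √β_i + √β_1, and consequently γ²·β_k·θ_k² ≥ (√β_1 + Σ_{i=1}^{k} √β_i)². -/

import Mathlib

open Finset

/-- For the PNPG momentum sequence `θ_1 = 1`,
`θ_i = 1/γ + √(b + (β_{i−1}/β_i) θ_{i−1}²)` for `i ≥ 2`, one has, for every `k ≥ 1`,
`θ_k √β_k ≥ (1/γ) Σ_{i=2}^k √β_i + √β_1` and hence
`γ² β_k θ_k² ≥ (√β_1 + Σ_{i=1}^k √β_i)²`. -/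
theorem momentum_growth (γ b : ℝ) (hγ : 2 ≤ γ) (hb0 : 0 ≤ b) (hb1 : b ≤ 1 / 4)
    (β θ : ℕ → ℝ) (hβ : ∀ i, 1 ≤ i → 0 < β i)
    (hθ1 : θ 1 = 1)
    (hθ : ∀ i, 2 ≤ i → θ i = 1 / γ + Real.sqrt (b + (β (i - 1) / β i) * (θ (i - 1)) ^ 2)) :
    ∀ k, 1 ≤ k →
      θ k * Real.sqrt (β k) ≥
          (1 / γ) * (∑ i ∈ Finset.Icc 2 k, Real.sqrt (β i)) + Real.sqrt (β 1) ∧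
        γ ^ 2 * β k * (θ k) ^ 2 ≥
          (Real.sqrt (β 1) + ∑ i ∈ Finset.Icc 1 k, Real.sqrt (β i)) ^ 2 := by
  have hγ0 : 0 < γ := by linarith
  have key : ∀ k, 1 ≤ k → θ k * Real.sqrt (β k) ≥
      (1 / γ) * (∑ i ∈ Finset.Icc 2 k, Real.sqrt (β i)) + Real.sqrt (β 1) := by
    intro k hk
    induction k, hk using Nat.le_induction with
    | base => simp [hθ1]
    | succ n hn ih =>
      have hβn := hβ n hn
      have hβn1 := hβ (n + 1) (by omega)
      have hsβ1 : 0 < Real.sqrt (β 1) := Real.sqrt_pos.mpr (hβ 1 le_rfl)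
      have hsum : 0 ≤ ∑ i ∈ Finset.Icc 2 n, Real.sqrt (β i) :=
        Finset.sum_nonneg fun i _ => Real.sqrt_nonneg _
      have hθn0 : 0 ≤ θ n := by
        by_contra h
        push_neg at h
        have h2 : θ n * Real.sqrt (β n) < 0 :=
          mul_neg_of_neg_of_pos h (Real.sqrt_pos.mpr hβn)
        have h3 : 0 < 1 / γ := by positivity
        nlinarith [mul_nonneg h3.le hsum]
      have heq := hθ (n + 1) (by omega)
      simp only [Nat.add_sub_cancel] at heq
      set r := b + (β n / β (n + 1)) * θ n ^ 2 with hr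
      have hr0 : 0 ≤ r := by rw [hr]; positivity
      have hkey : θ n * Real.sqrt (β n) ≤ Real.sqrt r * Real.sqrt (β (n + 1)) := by
        rw [← Real.sqrt_mul hr0]
        have h1 : θ n * Real.sqrt (β n) = Real.sqrt (θ n ^ 2 * β n) := by
          rw [Real.sqrt_mul (by positivity), Real.sqrt_sq hθn0]
        rw [h1]
        apply Real.sqrt_le_sqrt
        have h2 : r * β (n + 1) = b * β (n + 1) + θ n ^ 2 * β n := by
          rw [hr]; field_simp
        nlinarith [mul_nonneg hb0 hβn1.le]
      have hsum2 : ∑ i ∈ Finset.Icc 2 (n + 1), Real.sqrt (β i)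
          = (∑ i ∈ Finset.Icc 2 n, Real.sqrt (β i)) + Real.sqrt (β (n + 1)) := by
        rw [Finset.sum_Icc_succ_top (by omega)]
      rw [heq, hsum2]
      have h4 := Real.sqrt_nonneg (β (n + 1))
      nlinarith [ih, hkey]
  intro k hk
  refine ⟨key k hk, ?_⟩
  have hL := key k hk
  have hsβ1 : 0 < Real.sqrt (β 1) := Real.sqrt_pos.mpr (hβ 1 le_rfl)
  have hsum : 0 ≤ ∑ i ∈ Finset.Icc 2 k, Real.sqrt (β i) :=
    Finset.sum_nonneg fun i _ => Real.sqrt_nonneg _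
  have hIcc : Finset.Icc 1 k = insert 1 (Finset.Icc 2 k) := by
    ext x; simp [Finset.mem_Icc]; omega
  rw [hIcc, Finset.sum_insert (by simp)]
  have hsq : Real.sqrt (β k) ^ 2 = β k := Real.sq_sqrt (hβ k hk).le
  have hsβk : 0 ≤ Real.sqrt (β k) := Real.sqrt_nonneg _
  -- γ * (θ k * √β k) ≥ 2√β1 + S
  have hA : γ * (θ k * Real.sqrt (β k)) ≥
      2 * Real.sqrt (β 1) + ∑ i ∈ Finset.Icc 2 k, Real.sqrt (β i) := by
    have h5 : γ * (θ k * Real.sqrt (β k)) ≥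
        γ * ((1 / γ) * (∑ i ∈ Finset.Icc 2 k, Real.sqrt (β i)) + Real.sqrt (β 1)) :=
      mul_le_mul_of_nonneg_left hL hγ0.le
    have h6 : γ * ((1 / γ) * (∑ i ∈ Finset.Icc 2 k, Real.sqrt (β i)) + Real.sqrt (β 1))
        = (∑ i ∈ Finset.Icc 2 k, Real.sqrt (β i)) + γ * Real.sqrt (β 1) := by
      field_simp
    nlinarith
  have hA2 : γ ^ 2 * β k * θ k ^ 2 = (γ * (θ k * Real.sqrt (β k))) ^ 2 := by
    rw [mul_pow, mul_pow, hsq]; ring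
  rw [ge_iff_le, hA2]
  nlinarith [hA, hsβ1.le, hsum]
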